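/- Assume ψ is convex and let u be a global solution of the first-order gradient system (DS-1). Then t ↦ ‖u′(t)‖ = ‖∇ψ(u(t))‖ is nonincreasing on [0, ∞) and lim_{t→∞} ‖u′(t)‖ = inf_{z ∈ H} ‖∇ψ(z)‖. -/

import Mathlib

open Filter MeasureTheory Set InnerProductSpace Topology

section Aux
variable {H : Type*} [NormedAddCommGroup H] [InnerProductSpace ℝ H] [CompleteSpace H]

local notation "⟪" x ", " y "⟫" => @inner ℝ _ _ x y

lemma aux_grad_inner (ψ : H → ℝ) (x v : H) :
    ⟪gradient ψ x, v⟫ = fderiv ℝ ψ x v :=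
  InnerProductSpace.toDual_symm_apply

lemma aux_grad_contDiff (ψ : H → ℝ) (hψ : ContDiff ℝ 2 ψ) :
    ContDiff ℝ 1 (gradient ψ) := by
  have h1 : ContDiff ℝ 1 (fderiv ℝ ψ) := hψ.fderiv_right (by norm_num)
  exact (toDual ℝ H).symm.contDiff.comp h1

lemma aux_conv_ineq (ψ : H → ℝ) (hψ : ContDiff ℝ 2 ψ) (hconv : ConvexOn ℝ univ ψ) (x y : H) :
    ψ x + ⟪gradient ψ x, y - x⟫ ≤ ψ y := by
  rcases eq_or_ne x y with rfl | hne
  · simp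
  have hdiff : Differentiable ℝ ψ := hψ.differentiable (by norm_num)
  set F : ℝ → ℝ := fun t => ψ (x + t • (y - x)) with hF
  have hFconv : ConvexOn ℝ univ F := by
    have h := hconv.comp_affineMap (AffineMap.lineMap x y : ℝ →ᵃ[ℝ] H)
    have : F = ψ ∘ (AffineMap.lineMap x y : ℝ →ᵃ[ℝ] H) := by
      funext t
      simp [F, AffineMap.lineMap_apply, add_comm, vsub_eq_sub, vadd_eq_add]
    rw [this]
    simpa using h
  have hc : ∀ t : ℝ, HasDerivAt (fun s : ℝ => x + s • (y - x)) (y - x) t := by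
    intro t
    simpa using (((hasDerivAt_id t).smul_const (y - x)).const_add x)
  have hF' : HasDerivAt F ⟪gradient ψ x, y - x⟫ 0 := by
    have h0 : HasDerivAt F (fderiv ℝ ψ (x + (0:ℝ) • (y - x)) (y - x)) 0 :=
      (hdiff (x + (0:ℝ) • (y - x))).hasFDerivAt.comp_hasDerivAt 0 (hc 0)
    simpa [aux_grad_inner] using h0
  have hslope := hFconv.le_slope_of_hasDerivAt (mem_univ (0:ℝ)) (mem_univ (1:ℝ)) one_pos hF'
  have : slope F 0 1 = ψ y - ψ x := by
    simp [slope_def_field, F]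
  rw [this] at hslope
  linarith
end Aux
section Aux2
variable {H : Type*} [NormedAddCommGroup H] [InnerProductSpace ℝ H] [CompleteSpace H]

local notation "⟪" x ", " y "⟫" => @inner ℝ _ _ x y

lemma aux_mono (ψ : H → ℝ) (hψ : ContDiff ℝ 2 ψ) (hconv : ConvexOn ℝ univ ψ) (x y : H) :
    0 ≤ ⟪gradient ψ x - gradient ψ y, x - y⟫ := by
  have h1 := aux_conv_ineq ψ hψ hconv x y
  have h2 := aux_conv_ineq ψ hψ hconv y x
  have e1 : ⟪gradient ψ x, y - x⟫ = ⟪gradient ψ x, y⟫ - ⟪gradient ψ x, x⟫ := inner_sub_right _ _ _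
  have e2 : ⟪gradient ψ y, x - y⟫ = ⟪gradient ψ y, x⟫ - ⟪gradient ψ y, y⟫ := inner_sub_right _ _ _
  have e3 : ⟪gradient ψ x - gradient ψ y, x - y⟫
      = (⟪gradient ψ x, x⟫ - ⟪gradient ψ x, y⟫) - (⟪gradient ψ y, x⟫ - ⟪gradient ψ y, y⟫) := by
    rw [inner_sub_left, inner_sub_right, inner_sub_right]
  linarith

lemma aux_psd (ψ : H → ℝ) (hψ : ContDiff ℝ 2 ψ) (hconv : ConvexOn ℝ univ ψ) (x v : H) :
    0 ≤ ⟪fderiv ℝ (gradient ψ) x v, v⟫ := by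
  set G := gradient ψ with hG
  have hGdiff : Differentiable ℝ G := (aux_grad_contDiff ψ hψ).differentiable (by norm_num)
  set g : ℝ → ℝ := fun h => ⟪G (x + h • v) - G x, v⟫ with hg
  have hc : ∀ t : ℝ, HasDerivAt (fun s : ℝ => x + s • v) v t := by
    intro t; simpa using (((hasDerivAt_id t).smul_const v).const_add x)
  have hg' : HasDerivAt g ⟪fderiv ℝ G x v, v⟫ 0 := by
    have h1 : HasDerivAt (fun h : ℝ => G (x + h • v)) (fderiv ℝ G (x + (0:ℝ) • v) v) 0 :=
      by have := (hGdiff (x + (0:ℝ) • v)).hasFDerivAt.comp_hasDerivAt 0 (hc 0); exact this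
    have h2 : HasDerivAt (fun h : ℝ => G (x + h • v) - G x) (fderiv ℝ G x v) 0 := by
      simpa using h1.sub_const (G x)
    have h3 := h2.inner ℝ (hasDerivAt_const (0:ℝ) v)
    simpa using h3
  have hslope := hasDerivAt_iff_tendsto_slope.1 hg'
  have hmono : ∀ h : ℝ, 0 < h → 0 ≤ g h := by
    intro h hh
    have := aux_mono ψ hψ hconv (x + h • v) x
    have e : (x + h • v) - x = h • v := by abel
    rw [e, real_inner_smul_right] at this
    exact le_of_not_gt fun hlt => absurd this (not_le.2 (mul_neg_of_pos_of_neg hh hlt))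
  have hev : ∀ᶠ h in 𝓝[>] (0:ℝ), 0 ≤ slope g 0 h := by
    filter_upwards [self_mem_nhdsWithin] with h hh
    have hh' : (0:ℝ) < h := hh
    have : slope g 0 h = g h / h := by
      simp [slope_def_field, hg]
    rw [this]
    exact div_nonneg (hmono h hh') hh'.le
  have hsl2 : Tendsto (slope g 0) (𝓝[>] (0:ℝ)) (𝓝 ⟪fderiv ℝ G x v, v⟫) :=
    hslope.mono_left (nhdsWithin_mono _ (fun h hh => ne_of_gt hh))
  exact ge_of_tendsto hsl2 hev
end Aux2

local notation "⟪" x ", " y "⟫" => @inner ℝ _ _ x y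

/-- Proposition 3 (iii): if `ψ` is convex and `u` is a global solution of `u' = -∇ψ(u)`,
then `t ↦ ‖u'(t)‖ = ‖∇ψ(u t)‖` is nonincreasing on `[0, ∞)` and
`lim_{t→∞} ‖u'(t)‖ = inf_{z ∈ H} ‖∇ψ(z)‖`. -/
theorem stmt_9 {H : Type*} [NormedAddCommGroup H] [InnerProductSpace ℝ H] [CompleteSpace H]
    (ψ : H → ℝ) (hψ : ContDiff ℝ 2 ψ) (hconv : ConvexOn ℝ univ ψ)
    (u u' : ℝ → H)
    (hu : ∀ t ∈ Ici (0:ℝ), HasDerivWithinAt u (u' t) (Ici 0) t)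
    (hode : ∀ t ∈ Ici (0:ℝ), u' t = -(gradient ψ (u t))) :
    (∀ t ≥ (0:ℝ), ‖u' t‖ = ‖gradient ψ (u t)‖) ∧
      AntitoneOn (fun t => ‖u' t‖) (Ici 0) ∧
      Tendsto (fun t => ‖u' t‖) atTop (nhds (⨅ z : H, ‖gradient ψ z‖)) := by
  have hdiff : Differentiable ℝ ψ := hψ.differentiable (by norm_num)
  set G := gradient ψ with hG
  have hGc1 : ContDiff ℝ 1 G := aux_grad_contDiff ψ hψ
  have hGcont : Continuous G := hGc1.continuous
  have hGdiff : Differentiable ℝ G := hGc1.differentiable (by norm_num)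
  have hucont : ContinuousOn u (Ici 0) := fun t ht => (hu t ht).continuousWithinAt
  have part1 : ∀ t ≥ (0:ℝ), ‖u' t‖ = ‖gradient ψ (u t)‖ := fun t ht => by
    rw [hode t ht, norm_neg]
  have huD : ∀ t : ℝ, 0 < t → HasDerivAt u (u' t) t := fun t ht =>
    (hu t ht.le).hasDerivAt (Ici_mem_nhds ht)
  -- squared norm of the gradient along the trajectory
  set f : ℝ → ℝ := fun t => ⟪G (u t), G (u t)⟫ with hf
  have hfderiv : ∀ t : ℝ, 0 < t →
      HasDerivAt f (2 * ⟪fderiv ℝ G (u t) (u' t), G (u t)⟫) t := by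
    intro t ht
    have h1 : HasDerivAt (fun s => G (u s)) (fderiv ℝ G (u t) (u' t)) t :=
      (hGdiff (u t)).hasFDerivAt.comp_hasDerivAt t (huD t ht)
    have h2 := h1.inner ℝ h1
    convert h2 using 1
    · rfl
    · rfl
    rw [real_inner_comm]; ring
  have hGe : ∀ t : ℝ, 0 ≤ t → G (u t) = -(u' t) := by
    intro t ht
    rw [hode t ht, neg_neg]
  have hfnonpos : ∀ t : ℝ, 0 < t → deriv f t ≤ 0 := by
    intro t ht
    rw [(hfderiv t ht).deriv]
    have hpsd := aux_psd ψ hψ hconv (u t) (u' t)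
    rw [hGe t ht.le, inner_neg_right]
    linarith
  have hfcont : ContinuousOn f (Ici 0) :=
    (hGcont.comp_continuousOn hucont).inner (hGcont.comp_continuousOn hucont)
  have hfanti : AntitoneOn f (Ici 0) := by
    refine antitoneOn_of_deriv_nonpos (convex_Ici 0) hfcont ?_ ?_
    · intro t ht
      rw [interior_Ici] at ht
      exact (hfderiv t ht).differentiableAt.differentiableWithinAt
    · intro t ht
      rw [interior_Ici] at ht
      exact hfnonpos t ht
  have hfval : ∀ t ∈ Ici (0:ℝ), f t = ‖u' t‖^2 := by
    intro t ht
    rw [hf]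
    simp only [real_inner_self_eq_norm_sq]
    rw [← part1 t ht]
  have part2 : AntitoneOn (fun t => ‖u' t‖) (Ici 0) := by
    intro a ha b hb hab
    have h := hfanti ha hb hab
    rw [hfval a ha, hfval b hb] at h
    have h1 := norm_nonneg (u' a); have h2 := norm_nonneg (u' b)
    nlinarith
  refine ⟨part1, part2, ?_⟩
  -- limit part
  set A : ℝ → ℝ := fun t => ‖u' (t ⊔ 0)‖ with hA
  have hA_anti : Antitone A := fun s t hst =>
    part2 (le_max_right s 0) (le_max_right t 0) (sup_le_sup_right hst 0)
  have hAbdd : BddBelow (range A) := ⟨0, by rintro _ ⟨t, rfl⟩; exact norm_nonneg _⟩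
  set l : ℝ := ⨅ t, A t with hl
  have hl_nonneg : 0 ≤ l := le_ciInf fun t => norm_nonneg _
  have hl_le : ∀ t : ℝ, 0 ≤ t → l ≤ ‖u' t‖ := by
    intro t ht
    have h1 : l ≤ A t := ciInf_le hAbdd t
    have h2 : A t = ‖u' t‖ := by
      show ‖u' (t ⊔ 0)‖ = ‖u' t‖
      rw [sup_eq_left.mpr ht]
    rwa [h2] at h1
  have htendsA : Tendsto A atTop (nhds l) := tendsto_atTop_ciInf hA_anti hAbdd
  have htends : Tendsto (fun t => ‖u' t‖) atTop (nhds l) := by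
    refine htendsA.congr' ?_
    filter_upwards [Ici_mem_atTop (0:ℝ)] with t ht
    show ‖u' (t ⊔ 0)‖ = ‖u' t‖
    rw [sup_eq_left.mpr ht]
  -- continuity of the integrand
  have cont2 : ContinuousOn (fun s => ‖u' s‖^2) (Ici 0) := by
    have base : ContinuousOn (fun s => ‖G (u s)‖^2) (Ici 0) :=
      ((hGcont.comp_continuousOn hucont).norm).pow 2
    refine base.congr fun s hs => ?_
    rw [part1 s hs]
  -- FTC
  have hphi : ∀ T t : ℝ, 0 ≤ T → 0 ≤ t →
      ∫ s in T..(T+t), ‖u' s‖^2 = ψ (u T) - ψ (u (T+t)) := by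
    intro T t hT ht
    have hab : T ≤ T + t := by linarith
    have hsub : Icc T (T+t) ⊆ Ici (0:ℝ) := fun s hs => le_trans hT hs.1
    have hint : IntervalIntegrable (fun s => -‖u' s‖^2) volume T (T+t) := by
      refine ContinuousOn.intervalIntegrable ?_
      rw [uIcc_of_le hab]
      exact ((cont2.mono hsub).neg)
    have hFTC := intervalIntegral.integral_eq_sub_of_hasDerivAt_of_le hab
        (f := fun s => ψ (u s)) (f' := fun s => -‖u' s‖^2)
        ((hψ.continuous.comp_continuousOn (hucont.mono hsub)))
        (fun s hs => by
          have hs0 : 0 < s := lt_of_le_of_lt hT hs.1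
          have h1 : HasDerivAt (fun r => ψ (u r)) (fderiv ℝ ψ (u s) (u' s)) s :=
            (hdiff (u s)).hasFDerivAt.comp_hasDerivAt s (huD s hs0)
          have e : fderiv ℝ ψ (u s) (u' s) = -‖u' s‖^2 := by
            rw [← aux_grad_inner, ← hG, hGe s hs0.le, inner_neg_left,
              real_inner_self_eq_norm_sq]
          rwa [e] at h1)
        hint
    have hneg : (∫ s in T..(T+t), -‖u' s‖^2) = -∫ s in T..(T+t), ‖u' s‖^2 :=
      intervalIntegral.integral_neg
    rw [hneg] at hFTC
    linarith [hFTC]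
  have hmbdd : BddBelow (range fun z : H => ‖gradient ψ z‖) :=
    ⟨0, by rintro _ ⟨z, rfl⟩; exact norm_nonneg _⟩
  set m : ℝ := ⨅ z : H, ‖gradient ψ z‖ with hm
  have hml : m ≤ l := by
    refine le_ciInf fun t => ?_
    have h0 : (0:ℝ) ≤ t ⊔ 0 := le_max_right t 0
    calc m ≤ ‖gradient ψ (u (t ⊔ 0))‖ := ciInf_le hmbdd _
    _ = A t := (part1 _ h0).symm
  have key : ∀ z : H, l ≤ ‖gradient ψ z‖ := by
    intro z
    set b : ℝ := ‖gradient ψ z‖ with hb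
    have hb0 : (0:ℝ) ≤ b := norm_nonneg _
    have key2 : ∀ T : ℝ, 0 ≤ T → l^2 ≤ b * ‖u' T‖ := by
      intro T hT
      set C : ℝ := ψ (u T) - ψ z + b * ‖u T - z‖ with hC
      have key1 : ∀ t : ℝ, 0 < t → t * l^2 ≤ C + t * (b * ‖u' T‖) := by
        intro t ht
        have hsub : Icc T (T+t) ⊆ Ici (0:ℝ) := fun s hs => le_trans hT hs.1
        have hab : T ≤ T + t := by linarith
        have hint : IntervalIntegrable (fun s => ‖u' s‖^2) volume T (T+t) := by
          refine ContinuousOn.intervalIntegrable ?_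
          rw [uIcc_of_le hab]; exact cont2.mono hsub
        have hlow : t * l^2 ≤ ∫ s in T..(T+t), ‖u' s‖^2 := by
          have h2 : (∫ _ in T..(T+t), l^2) ≤ ∫ s in T..(T+t), ‖u' s‖^2 :=
            intervalIntegral.integral_mono_on hab intervalIntegrable_const hint
              (fun s hs => by
                have := hl_le s (hsub hs)
                nlinarith [norm_nonneg (u' s)])
          rw [intervalIntegral.integral_const] at h2
          have he : (T + t - T) • l^2 = t * l^2 := by
            rw [smul_eq_mul]; ring
          rwa [he] at h2
        have hlip : ‖u (T+t) - u T‖ ≤ ‖u' T‖ * t := by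
          have h3 := Convex.norm_image_sub_le_of_norm_hasDerivWithin_le
            (f := u) (f' := u') (s := Icc T (T+t)) (C := ‖u' T‖)
            (fun x hx => (hu x (hsub hx)).mono hsub)
            (fun x hx => part2 hT (hsub hx) hx.1)
            (convex_Icc T (T+t)) (left_mem_Icc.2 hab) (right_mem_Icc.2 hab)
          have he : ‖(T + t) - T‖ = t := by
            rw [add_sub_cancel_left, Real.norm_of_nonneg ht.le]
          rwa [he] at h3
        have hconv1 := aux_conv_ineq ψ hψ hconv z (u (T+t))
        have hinner : -(b * ‖u (T+t) - z‖) ≤ ⟪gradient ψ z, u (T+t) - z⟫ := by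
          have h4 := abs_real_inner_le_norm (gradient ψ z) (u (T+t) - z)
          have h5 := (abs_le.1 h4).1
          linarith
        have htri : ‖u (T+t) - z‖ ≤ ‖u T - z‖ + ‖u' T‖ * t := by
          calc ‖u (T+t) - z‖ = ‖(u (T+t) - u T) + (u T - z)‖ := by abel_nf
          _ ≤ ‖u (T+t) - u T‖ + ‖u T - z‖ := norm_add_le _ _
          _ ≤ ‖u' T‖ * t + ‖u T - z‖ := by linarith
          _ = ‖u T - z‖ + ‖u' T‖ * t := by ring
        have hFTCeq := hphi T t hT ht.le
        have hmul : b * ‖u (T+t) - z‖ ≤ b * (‖u T - z‖ + ‖u' T‖ * t) :=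
          mul_le_mul_of_nonneg_left htri hb0
        have hexp : b * (‖u T - z‖ + ‖u' T‖ * t) = b * ‖u T - z‖ + t * (b * ‖u' T‖) := by ring
        linarith
      by_contra hcon
      push_neg at hcon
      set d : ℝ := l^2 - b * ‖u' T‖ with hd
      have hd0 : 0 < d := by linarith
      have ht0 : 0 < (|C| + 1)/d := by positivity
      have h6 := key1 _ ht0
      have h7 : ((|C|+1)/d) * l^2 - ((|C|+1)/d) * (b * ‖u' T‖) = |C| + 1 := by
        rw [hd]; field_simp
      linarith [le_abs_self C]
    rcases eq_or_lt_of_le hb0 with hbz | hbpos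
    · have h8 := key2 0 le_rfl
      rw [← hbz] at h8
      simp at h8
      nlinarith [hl_nonneg]
    · have h9 : l^2/b ≤ l := by
        refine le_ciInf fun t => ?_
        have h10 := key2 (t ⊔ 0) (le_max_right t 0)
        rw [div_le_iff₀ hbpos]
        calc l^2 ≤ b * ‖u' (t ⊔ 0)‖ := h10
        _ = A t * b := by rw [hA]; ring
      rw [div_le_iff₀ hbpos] at h9
      nlinarith [hl_nonneg]
  have hlm : l = m := le_antisymm (le_ciInf key) hml
  rw [← hlm]
  exact htends
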